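/- Let a, b be coprime positive integers with b ≥ 2 and a odd. Then exactly one of the two equations a·x + b·y = (a+1)·b/2 + 1 and a·x + b·y = (a+1)·b/2 - 1 has a solution in positive integers x, y, and moreover that solution is unique. -/

import Mathlib

private lemma uniq_aux_lt (a b M x y x' y' : ℕ) (ha : 1 ≤ a) (hb : 1 ≤ b)
    (hcop : Nat.Coprime a b) (hM : M < a + a*b + b) (hx : 1 ≤ x)
    (hy : 1 ≤ y) (hy' : 1 ≤ y')
    (h1 : a*x + b*y = M) (h2 : a*x' + b*y' = M) (hlt : x < x') : False := by
  have hax : a*x < a*x' := by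
    have h := Nat.mul_le_mul_left a (show x+1 <= x' by omega)
    have e : a*(x+1) = a*x + a := by ring
    omega
  have hyy : y' < y := by
    have : b*y' < b*y := by omega
    exact lt_of_mul_lt_mul_left this (Nat.zero_le b)
  set d := x' - x with hd
  set e := y - y' with he
  have hx' : x' = x + d := by omega
  have hye : y = y' + e := by omega
  have key : a*d = b*e := by
    have e1 : a*x + a*d = a*x' := by rw [hx']; ring
    have e2 : b*y' + b*e = b*y := by rw [hye]; ring
    omega
  have hbd : b ∣ d := Nat.Coprime.dvd_of_dvd_mul_left hcop.symm ⟨e, key⟩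
  have hd1 : 1 ≤ d := by omega
  have hdb : b ≤ d := Nat.le_of_dvd (by omega) hbd
  have h3 : a*(1+b) ≤ a*x' := Nat.mul_le_mul_left a (by omega)
  have h4 : a*(1+b) = a + a*b := by ring
  have h5 : b ≤ b*y' := Nat.le_mul_of_pos_right b (by omega)
  omega

private lemma uniq_aux (a b M x y x' y' : ℕ) (ha : 1 ≤ a) (hb : 1 ≤ b)
    (hcop : Nat.Coprime a b) (hM : M < a + a*b + b) (hx : 1 ≤ x) (hx' : 1 ≤ x')
    (hy : 1 ≤ y) (hy' : 1 ≤ y')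
    (h1 : a*x + b*y = M) (h2 : a*x' + b*y' = M) : x = x' ∧ y = y' := by
  rcases lt_trichotomy x x' with h | h | h
  · exact absurd (uniq_aux_lt a b M x y x' y' ha hb hcop hM hx hy hy' h1 h2 h) (by simp)
  · subst h
    have : b*y = b*y' := by omega
    have : y = y' := Nat.eq_of_mul_eq_mul_left (by omega) this
    exact ⟨rfl, this⟩
  · exact absurd (uniq_aux_lt a b M x' y' x y ha hb hcop hM hx' hy' hy h2 h1 h) (by simp)

theorem stmt11 (a b : ℕ) (ha : 0 < a) (hb : 2 ≤ b) (hcop : Nat.Coprime a b)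
    (hodd : Odd a) :
    ((∃! p : ℕ × ℕ, 1 ≤ p.1 ∧ 1 ≤ p.2 ∧ a * p.1 + b * p.2 = (a+1)*b/2 + 1) ∧
      ¬ (∃ x y : ℕ, 1 ≤ x ∧ 1 ≤ y ∧ a * x + b * y = (a+1)*b/2 - 1)) ∨
    ((¬ (∃ x y : ℕ, 1 ≤ x ∧ 1 ≤ y ∧ a * x + b * y = (a+1)*b/2 + 1)) ∧
      (∃! p : ℕ × ℕ, 1 ≤ p.1 ∧ 1 ≤ p.2 ∧ a * p.1 + b * p.2 = (a+1)*b/2 - 1)) := by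
  obtain ⟨m, hm⟩ := hodd
  set c := m + 1 with hcdef
  have hc1 : 1 ≤ c := by omega
  have hac : a + 1 = 2*c := by omega
  have hN : (a+1)*b/2 = c*b := by
    rw [show (a+1)*b = 2*(c*b) by rw [hac]; ring]
    exact Nat.mul_div_cancel_left _ (by norm_num)
  rw [hN]
  have hcb2 : 2 ≤ c*b := by
    calc 2 ≤ b := hb
    _ = 1*b := (one_mul b).symm
    _ ≤ c*b := Nat.mul_le_mul_right b hc1
  have hab : a*b + b = 2*(c*b) := by
    have h1 : (a+1)*b = 2*(c*b) := by rw [hac]; ring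
    have h2 : (a+1)*b = a*b + b := by ring
    omega
  -- inverse of a mod b
  obtain ⟨x0, -, hx0⟩ := Nat.exists_mul_mod_eq_one_of_coprime hcop (by omega)
  set x1 := x0 % b with hx1def
  have hx1mod : a * x1 % b = 1 := by
    rw [hx1def, Nat.mul_mod, Nat.mod_mod_of_dvd, ← Nat.mul_mod, hx0]
    exact dvd_refl b
  have hx1lt : x1 < b := Nat.mod_lt _ (by omega)
  have hx1pos : 1 ≤ x1 := by
    rcases Nat.eq_zero_or_pos x1 with h | h
    · rw [h] at hx1mod; simp at hx1mod
    · exact h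
  set q := a * x1 / b with hqdef
  have hax1 : a * x1 = b * q + 1 := by
    have h := Nat.div_add_mod (a * x1) b
    rw [← hqdef, hx1mod] at h
    omega
  -- bound q ≤ 2c - 2
  have hx1le : a * x1 ≤ a * (b-1) := Nat.mul_le_mul_left a (by omega)
  have habm : a*(b-1) + a = a*b := by
    have : a*(b-1+1) = a*(b-1) + a := by ring
    rw [show b-1+1 = b by omega] at this
    omega
  have hq2c : q ≤ 2*c - 2 := by
    -- b*q + 1 ≤ a*b - a ; a*b = 2cb - b
    have h1 : b*q + 1 + a ≤ a*b := by omega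
    by_contra hcon
    have hq' : 2*c - 1 ≤ q := by omega
    have : b*(2*c-1) ≤ b*q := Nat.mul_le_mul_left b hq'
    have hbex : b*(2*c-1) + b = b*(2*c) := by
      have : b*(2*c-1+1) = b*(2*c-1) + b := by ring
      rw [show 2*c-1+1 = 2*c by omega] at this
      omega
    have hb2c : b*(2*c) = 2*(c*b) := by ring
    omega
  have hMlt : ∀ M : ℕ, M ≤ c*b + 1 → M < a + a*b + b := by
    intro M hM
    omega
  by_cases hq : q + 1 ≤ c
  · -- plus equation solvable
    left
    constructor
    · refine ⟨(x1, c - q), ⟨hx1pos, by simp; omega, ?_⟩, ?_⟩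
      · simp only
        have : b*(q + (c-q)) = b*c := by rw [show q + (c-q) = c by omega]
        have hbe : b*(q + (c-q)) = b*q + b*(c-q) := by ring
        have hcb : b*c = c*b := by ring
        omega
      · rintro ⟨x, y⟩ ⟨hx, hy, heq⟩
        simp only at heq hx hy ⊢
        have := uniq_aux a b (c*b+1) x y x1 (c-q) ha (by omega) hcop
          (hMlt _ (le_refl _)) hx hx1pos hy (by omega) heq
          (by
            have : b*(q + (c-q)) = b*c := by rw [show q + (c-q) = c by omega]
            have hbe : b*(q + (c-q)) = b*q + b*(c-q) := by ring
            have hcb : b*c = c*b := by ring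
            omega)
        exact Prod.ext this.1 this.2
    · -- minus not solvable
      rintro ⟨x, y, hx, hy, heq⟩
      have heq' : a*x + b*y + 1 = c*b := by omega
      -- key : a*(x+x1) + b*y = b*(c+q)
      have key : a*(x+x1) + b*y = b*(c+q) := by
        have e1 : a*(x+x1) = a*x + a*x1 := by ring
        have e2 : b*(c+q) = b*c + b*q := by ring
        have hcb : b*c = c*b := by ring
        omega
      have hble : b*y ≤ b*(c+q) := by omega
      have hyle : y ≤ c + q := le_of_mul_le_mul_left hble (by omega)
      have hdvd : b ∣ x + x1 := by
        refine Nat.Coprime.dvd_of_dvd_mul_left hcop.symm ⟨c + q - y, ?_⟩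
        have : b*(c+q-y) + b*y = b*(c+q) := by
          have : b*((c+q-y)+y) = b*(c+q-y) + b*y := by ring
          rw [show c+q-y+y = c+q by omega] at this
          omega
        omega
      have hxx1 : b ≤ x + x1 := Nat.le_of_dvd (by omega) hdvd
      -- a*x ≥ a*b - a*x1
      have h1 : a*b ≤ a*(x+x1) := Nat.mul_le_mul_left a hxx1
      have h2 : a*(x+x1) = a*x + a*x1 := by ring
      -- b*y ≥ b
      have h3 : b ≤ b*y := Nat.le_mul_of_pos_right b (by omega)
      -- q+1 ≤ c gives b*(q+1) ≤ b*c
      have h4 : b*(q+1) ≤ b*c := Nat.mul_le_mul_left b hq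
      have h5 : b*(q+1) = b*q + b := by ring
      have hcb : b*c = c*b := by ring
      omega
  · -- q ≥ c : minus equation solvable
    right
    have hqc : c ≤ q := by omega
    have hax1' : c*b + 1 ≤ a*x1 := by
      have : b*c ≤ b*q := Nat.mul_le_mul_left b hqc
      have hcb : b*c = c*b := by ring
      omega
    set x2 := b - x1 with hx2def
    have hx2pos : 1 ≤ x2 := by omega
    have hax2 : a*x2 + a*x1 = a*b := by
      have : a*(x2+x1) = a*x2 + a*x1 := by ring
      rw [show x2+x1 = b by omega] at this
      omega
    set y2 := q + 1 - c with hy2def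
    have hy2pos : 1 ≤ y2 := by omega
    have hminus : a*x2 + b*y2 = c*b - 1 := by
      have h1 : b*y2 + b*c = b*q + b := by
        have : b*(y2+c) = b*y2 + b*c := by ring
        rw [show y2+c = q+1 by omega] at this
        have : b*(q+1) = b*q + b := by ring
        omega
      have hcb : b*c = c*b := by ring
      -- a*x2 = a*b - b*q - 1 ; a*b + b = 2*(c*b)
      omega
    constructor
    · -- plus not solvable
      rintro ⟨x, y, hx, hy, heq⟩
      -- key : a*x + b*(q+y) = a*x1 + b*c
      have key : a*x + b*(q+y) = a*x1 + b*c := by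
        have e1 : b*(q+y) = b*q + b*y := by ring
        have hcb : b*c = c*b := by ring
        omega
      have hqy : c + 1 ≤ q + y := by omega
      have h6 : b*(c+1) ≤ b*(q+y) := Nat.mul_le_mul_left b hqy
      have h7 : b*(c+1) = b*c + b := by ring
      have hxlt : x < x1 := by
        have : a*x + b ≤ a*x1 := by omega
        have : a*x < a*x1 := by omega
        exact lt_of_mul_lt_mul_left this (Nat.zero_le a)
      set d := x1 - x with hddef
      have hd1 : 1 ≤ d := by omega
      have hdlt : d < b := by omega
      have hadd : a*x + a*d = a*x1 := by
        have : a*(x+d) = a*x + a*d := by ring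
        rw [show x+d = x1 by omega] at this
        omega
      have hbd : b ∣ d := by
        refine Nat.Coprime.dvd_of_dvd_mul_left hcop.symm ⟨q + y - c, ?_⟩
        have : b*(q+y-c) + b*c = b*(q+y) := by
          have : b*((q+y-c)+c) = b*(q+y-c) + b*c := by ring
          rw [show q+y-c+c = q+y by omega] at this
          omega
        have hda : d*a = a*d := by ring
        omega
      have := Nat.le_of_dvd (by omega) hbd
      omega
    · refine ⟨(x2, y2), ⟨hx2pos, hy2pos, hminus⟩, ?_⟩
      rintro ⟨x, y⟩ ⟨hx, hy, heq⟩
      simp only at heq hx hy ⊢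
      have := uniq_aux a b (c*b-1) x y x2 y2 ha (by omega) hcop
        (hMlt _ (by omega)) hx hx2pos hy hy2pos heq hminus
      exact Prod.ext this.1 this.2
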